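/- Let T be a nondeterministic finite transducer over Σ and let A be a CEFA over Σ with k cost registers. Then the set {(w, n) ∈ Σ* × ℤ^k : there exists u ∈ Σ* with (w, u) ∈ T(T) and (u, n) ∈ L(A)} is a cost-enriched regular language with k cost registers; that is, the cost-enriched pre-image of L(A) under the transduction defined by T is accepted by a single CEFA (one whose state set is the product of the state sets of T and A, and whose transitions summarise, for each transducer transition with output word u, the cost updates of A along runs over u). -/

import Mathlib

/-- A cost-enriched finite automaton (CEFA) over alphabet `σ` with `k` cost registers:
states `Q`, a transition set `δ` of tuples `(q, a, q', η)` with update vector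
`η : Fin k → ℤ`, initial states `I` and final states `F`. -/
structure CEFA (σ : Type) (k : ℕ) where
  Q : Type
  δ : Set (Q × σ × Q × (Fin k → ℤ))
  I : Set Q
  F : Set Q

namespace CEFA

variable {σ : Type} {k : ℕ}

/-- A CEFA is finite if its state set and its transition set are finite. -/
def IsFinite (A : CEFA σ k) : Prop := Finite A.Q ∧ A.δ.Finite

/-- `Reach A q w n q'` holds if there is a sequence of transitions of `A` from `q` to `q'`
reading the word `w`, whose cost updates sum up to `n`. -/
inductive Reach (A : CEFA σ k) : A.Q → List σ → (Fin k → ℤ) → A.Q → Prop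
  | nil (q : A.Q) : Reach A q [] 0 q
  | cons {q q' q'' : A.Q} {a : σ} {w : List σ} {η n : Fin k → ℤ} :
      (q, a, q', η) ∈ A.δ → Reach A q' w n q'' → Reach A q (a :: w) (η + n) q''

/-- The cost-enriched language of a CEFA: all pairs `(w, n)` admitting an accepting run. -/
def Lang (A : CEFA σ k) : Set (List σ × (Fin k → ℤ)) :=
  {p | ∃ q₀ qf, q₀ ∈ A.I ∧ qf ∈ A.F ∧ Reach A q₀ p.1 p.2 qf}

end CEFA

/-- A cost-enriched regular language (CERL): a set accepted by some (finite) CEFA. -/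
def IsCERL {σ : Type} {k : ℕ} (L : Set (List σ × (Fin k → ℤ))) : Prop :=
  ∃ A : CEFA σ k, A.IsFinite ∧ A.Lang = L

/-- A nondeterministic finite transducer (NFT) over `σ`: transitions `(q, a, q', u)`
read the letter `a` and output the word `u`. -/
structure NFT (σ : Type) where
  Q : Type
  δ : Set (Q × σ × Q × List σ)
  I : Set Q
  F : Set Q

namespace NFT

variable {σ : Type}

/-- An NFT is finite if its state set and transition set are finite. -/
def IsFinite (T : NFT σ) : Prop := Finite T.Q ∧ T.δ.Finite

/-- `Run T q w out q'`: a sequence of transitions of `T` from `q` to `q'` reading `w`,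
whose outputs concatenate to `out`. -/
inductive Run (T : NFT σ) : T.Q → List σ → List σ → T.Q → Prop
  | nil (q : T.Q) : Run T q [] [] q
  | cons {q q' q'' : T.Q} {a : σ} {w u out : List σ} :
      (q, a, q', u) ∈ T.δ → Run T q' w out q'' → Run T q (a :: w) (u ++ out) q''

/-- The transduction defined by `T`: all pairs `(w, u)` such that some accepting run of `T`
on `w` has output `u`. -/
def Trans (T : NFT σ) : Set (List σ × List σ) :=
  {p | ∃ q₀ qf, q₀ ∈ T.I ∧ qf ∈ T.F ∧ Run T q₀ p.1 p.2 qf}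

end NFT

section Aux

variable {σ : Type} {k : ℕ}

lemma reach_compose {A : CEFA σ k} {q q' q'' : A.Q} {u v : List σ} {n1 n2 : Fin k → ℤ}
    (h1 : A.Reach q u n1 q') (h2 : A.Reach q' v n2 q'') :
    A.Reach q (u ++ v) (n1 + n2) q'' := by
  induction h1 with
  | nil => simpa using h2
  | cons ht _ ih => simpa [add_assoc] using CEFA.Reach.cons ht (ih h2)

lemma reach_decompose {A : CEFA σ k} {u : List σ} (v : List σ) :
    ∀ {q q'' : A.Q} {n : Fin k → ℤ}, A.Reach q (u ++ v) n q'' →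
      ∃ q' n1 n2, A.Reach q u n1 q' ∧ A.Reach q' v n2 q'' ∧ n = n1 + n2 := by
  induction u with
  | nil =>
    intro q q'' n h
    exact ⟨q, 0, n, CEFA.Reach.nil q, h, (zero_add n).symm⟩
  | cons a u ih =>
    intro q q'' n h
    cases h with
    | cons ht hr =>
      obtain ⟨q', n1, n2, h1, h2, rfl⟩ := ih hr
      exact ⟨q', _ + n1, n2, CEFA.Reach.cons ht h1, h2, (add_assoc _ _ _).symm⟩

lemma reach_set_finite (A : CEFA σ k) (hQ : Finite A.Q) (hδ : A.δ.Finite) (u : List σ) :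
    {t : A.Q × (Fin k → ℤ) × A.Q | A.Reach t.1 u t.2.1 t.2.2}.Finite := by
  induction u with
  | nil =>
    apply Set.Finite.subset (Set.finite_range (fun q : A.Q => (q, (0 : Fin k → ℤ), q)))
    rintro ⟨q, n, q'⟩ h
    cases h
    exact ⟨q, rfl⟩
  | cons a u ih =>
    apply Set.Finite.subset ((hδ.prod ih).image
      (fun x : (A.Q × σ × A.Q × (Fin k → ℤ)) × A.Q × (Fin k → ℤ) × A.Q =>
        (x.1.1, x.1.2.2.2 + x.2.2.1, x.2.2.2)))
    rintro ⟨q, n, q''⟩ h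
    cases h with
    | @cons _ q' _ _ _ η m ht hr =>
      exact ⟨((q, a, q', η), (q', m, q'')), ⟨ht, hr⟩, rfl⟩

end Aux

/-- the cost-enriched pre-image of the language of a CEFA `A` under the
transduction of an NFT `T`, i.e. `{(w, n) : ∃ u, (w, u) ∈ T(T) ∧ (u, n) ∈ L(A)}`,
is a cost-enriched regular language with the same number of registers. -/
theorem nft_preimage_isCERL {σ : Type} [Fintype σ] {k : ℕ}
    (T : NFT σ) (hT : T.IsFinite) (A : CEFA σ k) (hA : A.IsFinite) :
    IsCERL {p : List σ × (Fin k → ℤ) |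
      ∃ u : List σ, (p.1, u) ∈ T.Trans ∧ (u, p.2) ∈ A.Lang} := by
  classical
  set B : CEFA σ k :=
    { Q := T.Q × A.Q
      δ := {x : (T.Q × A.Q) × σ × (T.Q × A.Q) × (Fin k → ℤ) |
        ∃ u : List σ, (x.1.1, x.2.1, x.2.2.1.1, u) ∈ T.δ ∧
          A.Reach x.1.2 u x.2.2.2 x.2.2.1.2}
      I := {s | s.1 ∈ T.I ∧ s.2 ∈ A.I}
      F := {s | s.1 ∈ T.F ∧ s.2 ∈ A.F} } with hB
  -- forward simulation
  have fwd : ∀ {q q' : T.Q} {w u : List σ}, T.Run q w u q' →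
      ∀ {p p' : A.Q} {n : Fin k → ℤ}, A.Reach p u n p' →
        B.Reach (q, p) w n (q', p') := by
    intro q q' w u hrun
    induction hrun with
    | nil =>
      intro p p' n hr
      cases hr
      exact CEFA.Reach.nil _
    | @cons q q1 q'' a w u out ht _ ih =>
      intro p p' n hr
      obtain ⟨mid, n1, n2, h1, h2, rfl⟩ := reach_decompose out hr
      exact CEFA.Reach.cons (q' := (q1, mid)) ⟨u, ht, h1⟩ (ih h2)
  -- backward simulation
  have bwd : ∀ {s s' : B.Q} {w : List σ} {n : Fin k → ℤ}, B.Reach s w n s' →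
      ∃ u, T.Run s.1 w u s'.1 ∧ A.Reach s.2 u n s'.2 := by
    intro s s' w n h
    induction h with
    | nil q => exact ⟨[], NFT.Run.nil _, CEFA.Reach.nil _⟩
    | @cons s s1 s'' a w η m ht _ ih =>
      obtain ⟨u0, hTt, hr0⟩ := ht
      obtain ⟨u, hrun, hr⟩ := ih
      exact ⟨u0 ++ u, NFT.Run.cons hTt hrun, reach_compose hr0 hr⟩
  refine ⟨B, ⟨⟨?_, ?_⟩, ?_⟩⟩
  · have := hT.1; have := hA.1
    exact Finite.instProd
  · -- finiteness of transitions
    apply Set.Finite.subset (Set.Finite.biUnion hT.2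
      (fun t _ => ((reach_set_finite A hA.1 hA.2 t.2.2.2).image
        (fun y : A.Q × (Fin k → ℤ) × A.Q =>
          ((t.1, y.1), t.2.1, (t.2.2.1, y.2.2), y.2.1)))))
    rintro ⟨⟨q, p⟩, a, ⟨q', p'⟩, η⟩ ⟨u, hTt, hr⟩
    exact Set.mem_biUnion hTt ⟨(p, η, p'), hr, rfl⟩
  · ext ⟨w, n⟩
    constructor
    · rintro ⟨⟨q0, p0⟩, ⟨qf, pf⟩, ⟨hq0, hp0⟩, ⟨hqf, hpf⟩, hr⟩
      obtain ⟨u, hrun, hreach⟩ := bwd hr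
      exact ⟨u, ⟨q0, qf, hq0, hqf, hrun⟩, ⟨p0, pf, hp0, hpf, hreach⟩⟩
    · rintro ⟨u, ⟨q0, qf, hq0, hqf, hrun⟩, ⟨p0, pf, hp0, hpf, hreach⟩⟩
      exact ⟨(q0, p0), (qf, pf), ⟨hq0, hp0⟩, ⟨hqf, hpf⟩, fwd hrun hreach⟩
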